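/- arXiv:0809.4964 — 2 statements merged into one kernel-verified Lean document; each statement's English description precedes it below -/
import Mathlib

section
/- For any quasi-uniform space (X, 𝒰), the stability space (S_D(X), 𝒰_D) is bicomplete, i.e., the uniformity (𝒰_D)^s is complete: every (𝒰_D)^s-Cauchy filter on S_D(X) converges in the topology τ((𝒰_D)^s). -/
open Filter Set

variable {X Y : Type*}

/-- Image of a set under a relation: `U(A) = {y : ∃ x ∈ A, (x,y) ∈ U}`. -/
def relImg (U : Set (X × X)) (A : Set X) : Set X := {y | ∃ x ∈ A, (x, y) ∈ U}

/-- Inverse image: `U⁻¹(A) = {y : ∃ x ∈ A, (y,x) ∈ U}`. -/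
def relPre (U : Set (X × X)) (A : Set X) : Set X := {y | ∃ x ∈ A, (y, x) ∈ U}

/-- A quasi-uniformity: a filter of reflexive relations, each containing
a relational square of a member. -/
structure IsQuasiUniformity (𝒰 : Filter (X × X)) : Prop where
  refl : ∀ U ∈ 𝒰, (SetRel.id : Set (X × X)) ⊆ U
  comp : ∀ U ∈ 𝒰, ∃ V ∈ 𝒰, SetRel.comp V V ⊆ U

/-- A filter is stable if `⋂_{F ∈ ℱ} U(F) ∈ ℱ` for all `U ∈ 𝒰`. -/
def IsStable (𝒰 : Filter (X × X)) (ℱ : Filter X) : Prop :=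
  ∀ U ∈ 𝒰, (⋂ F ∈ ℱ.sets, relImg U F) ∈ ℱ

/-- `U_ℱ = ⋂_{F ∈ ℱ} (U⁻¹(F) ∩ U(F))`. -/
def bigU (U : Set (X × X)) (ℱ : Filter X) : Set X :=
  ⋂ F ∈ ℱ.sets, (relPre U F ∩ relImg U F)

/-- A filter is doubly stable if `U_ℱ ∈ ℱ` for all `U ∈ 𝒰`. -/
def IsDoublyStable (𝒰 : Filter (X × X)) (ℱ : Filter X) : Prop :=
  ∀ U ∈ 𝒰, bigU U ℱ ∈ ℱ

/-- The 2-envelope of a filter. -/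
def envelope (𝒰 : Filter (X × X)) (ℱ : Filter X) : Filter X :=
  Filter.generate {S | ∃ U ∈ 𝒰, ∃ F ∈ ℱ, S = relPre U F ∩ relImg U F}

/-- The filter `ℱ_𝒰` generated by `{U_ℱ : U ∈ 𝒰}`. -/
def filterU (𝒰 : Filter (X × X)) (ℱ : Filter X) : Filter X :=
  Filter.generate {S | ∃ U ∈ 𝒰, S = bigU U ℱ}

/-- `τ(𝒰)`-cluster points of a filter. -/
def fwdCluster (𝒰 : Filter (X × X)) (ℱ : Filter X) : Set X :=
  {x | ∀ F ∈ ℱ, ∀ U ∈ 𝒰, ∃ y ∈ F, (x, y) ∈ U}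

/-- `τ(𝒰⁻¹)`-cluster points of a filter. -/
def bwdCluster (𝒰 : Filter (X × X)) (ℱ : Filter X) : Set X :=
  {x | ∀ F ∈ ℱ, ∀ U ∈ 𝒰, ∃ y ∈ F, (y, x) ∈ U}

/-- The set of double cluster points of a filter. -/
def doubleCluster (𝒰 : Filter (X × X)) (ℱ : Filter X) : Set X :=
  fwdCluster 𝒰 ℱ ∩ bwdCluster 𝒰 ℱ

/-- The basic entourage `U_D = U_+ ∩ U_-` of the stability quasi-uniformity. -/
def UD (U : Set (X × X)) : Set (Filter X × Filter X) :=
  {p | (⋂ F ∈ p.1.sets, relImg U F) ∈ p.2 ∧ (⋂ G ∈ p.2.sets, relPre U G) ∈ p.1}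

lemma relImg_mono_left {U V : Set (X × X)} (h : U ⊆ V) (A : Set X) :
    relImg U A ⊆ relImg V A := fun _ ⟨x, hx, hxy⟩ => ⟨x, hx, h hxy⟩

lemma relPre_mono_left {U V : Set (X × X)} (h : U ⊆ V) (A : Set X) :
    relPre U A ⊆ relPre V A := fun _ ⟨x, hx, hxy⟩ => ⟨x, hx, h hxy⟩

lemma bigU_mono_left {U V : Set (X × X)} (h : U ⊆ V) (ℱ : Filter X) :
    bigU U ℱ ⊆ bigU V ℱ := by
  intro x hx
  simp only [bigU, mem_iInter, mem_inter_iff] at hx ⊢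
  intro F hF
  exact ⟨relPre_mono_left h F (hx F hF).1, relImg_mono_left h F (hx F hF).2⟩

/-- The candidate limit filter of a Cauchy filter on the stability space. -/
def limFilter (𝒰 : Filter (X × X)) (Φ : Filter {ℱ : Filter X // IsDoublyStable 𝒰 ℱ}) :
    Filter X where
  sets := {A | ∃ U ∈ 𝒰, ∀ᶠ 𝒢 in Φ, bigU U 𝒢.1 ⊆ A}
  univ_sets := ⟨univ, univ_mem, Eventually.of_forall fun _ => subset_univ _⟩
  sets_of_superset := by
    rintro A B ⟨U, hU, hA⟩ hAB
    exact ⟨U, hU, hA.mono fun 𝒢 h => h.trans hAB⟩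
  inter_sets := by
    rintro A B ⟨U, hU, hA⟩ ⟨V, hV, hB⟩
    refine ⟨U ∩ V, inter_mem hU hV, ?_⟩
    filter_upwards [hA, hB] with 𝒢 h1 h2
    exact subset_inter ((bigU_mono_left inter_subset_left _).trans h1)
      ((bigU_mono_left inter_subset_right _).trans h2)

lemma mem_limFilter {𝒰 : Filter (X × X)} {Φ : Filter {ℱ : Filter X // IsDoublyStable 𝒰 ℱ}}
    {A : Set X} :
    A ∈ limFilter 𝒰 Φ ↔ ∃ U ∈ 𝒰, ∀ᶠ 𝒢 in Φ, bigU U 𝒢.1 ⊆ A := Iff.rfl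

/-- If `V ∘ V ⊆ U` and `𝒢, 𝒢'` are mutually `UD V`-related, then
`bigU V 𝒢' ⊆ bigU U 𝒢`. -/
lemma lemA {U V : Set (X × X)} (hVV : SetRel.comp V V ⊆ U) {𝒢 𝒢' : Filter X}
    (h1 : (𝒢, 𝒢') ∈ UD V) (h2 : (𝒢', 𝒢) ∈ UD V) :
    bigU V 𝒢' ⊆ bigU U 𝒢 := by
  intro x hx
  simp only [bigU, mem_iInter, mem_inter_iff] at hx ⊢
  intro G hG
  constructor
  · have hB : (⋂ F ∈ 𝒢.sets, relPre V F) ∈ 𝒢' := h2.2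
    obtain ⟨y, hyB, hxy⟩ := (hx _ hB).1
    simp only [mem_iInter] at hyB
    obtain ⟨g, hg, hyg⟩ := hyB G hG
    exact ⟨g, hg, hVV ⟨y, hxy, hyg⟩⟩
  · have hA : (⋂ F ∈ 𝒢.sets, relImg V F) ∈ 𝒢' := h1.1
    obtain ⟨y, hyA, hyx⟩ := (hx _ hA).2
    simp only [mem_iInter] at hyA
    obtain ⟨g, hg, hgy⟩ := hyA G hG
    exact ⟨g, hg, hVV ⟨y, hgy, hyx⟩⟩

/-- Key lemma: for `𝒢` in a Cauchy set `S` for `V` with `V ∘ V ⊆ U`,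
`bigU V 𝒢 ⊆ bigU U (limFilter 𝒰 Φ)`. -/
lemma lemKEY {𝒰 : Filter (X × X)} {Φ : Filter {ℱ : Filter X // IsDoublyStable 𝒰 ℱ}}
    [Φ.NeBot] {U V : Set (X × X)} (hVV : SetRel.comp V V ⊆ U)
    {S : Set {ℱ : Filter X // IsDoublyStable 𝒰 ℱ}} (hS : S ∈ Φ)
    (hpair : ∀ p ∈ S, ∀ q ∈ S, (p.1, q.1) ∈ UD V ∧ (q.1, p.1) ∈ UD V)
    {𝒢 : {ℱ : Filter X // IsDoublyStable 𝒰 ℱ}} (h𝒢 : 𝒢 ∈ S) :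
    bigU V 𝒢.1 ⊆ bigU U (limFilter 𝒰 Φ) := by
  intro x hx
  simp only [bigU, mem_iInter, mem_inter_iff] at hx ⊢
  intro H hH
  obtain ⟨W, hW, hT⟩ := hH
  obtain ⟨𝒢', h𝒢'S, h𝒢'H⟩ := Filter.nonempty_of_mem (inter_mem hS hT)
  have hTmem : bigU W 𝒢'.1 ∈ 𝒢'.1 := 𝒢'.2 W hW
  constructor
  · have hB : (⋂ F ∈ 𝒢'.1.sets, relPre V F) ∈ 𝒢.1 := (hpair 𝒢 h𝒢 𝒢' h𝒢'S).1.2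
    obtain ⟨g, hgB, hxg⟩ := (hx _ hB).1
    simp only [mem_iInter] at hgB
    obtain ⟨h, hh, hgh⟩ := hgB _ hTmem
    exact ⟨h, h𝒢'H hh, hVV ⟨g, hxg, hgh⟩⟩
  · have hA : (⋂ F ∈ 𝒢'.1.sets, relImg V F) ∈ 𝒢.1 := (hpair 𝒢 h𝒢 𝒢' h𝒢'S).2.1
    obtain ⟨g, hgA, hgx⟩ := (hx _ hA).2
    simp only [mem_iInter] at hgA
    obtain ⟨h, hh, hhg⟩ := hgA _ hTmem
    exact ⟨h, h𝒢'H hh, hVV ⟨g, hhg, hgx⟩⟩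

lemma bigU_subset_iInter_relImg (U : Set (X × X)) (ℱ : Filter X) :
    bigU U ℱ ⊆ ⋂ F ∈ ℱ.sets, relImg U F := by
  intro x hx
  simp only [bigU, mem_iInter, mem_inter_iff] at hx ⊢
  exact fun F hF => (hx F hF).2

lemma bigU_subset_iInter_relPre (U : Set (X × X)) (ℱ : Filter X) :
    bigU U ℱ ⊆ ⋂ F ∈ ℱ.sets, relPre U F := by
  intro x hx
  simp only [bigU, mem_iInter, mem_inter_iff] at hx ⊢
  exact fun F hF => (hx F hF).1

theorem stmt18 (𝒰 : Filter (X × X)) (h𝒰 : IsQuasiUniformity 𝒰)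
    (Φ : Filter {ℱ : Filter X // IsDoublyStable 𝒰 ℱ}) (hne : Φ.NeBot)
    (hcauchy : ∀ U ∈ 𝒰, ∃ S ∈ Φ, ∀ p ∈ S, ∀ q ∈ S,
      ((p : {ℱ : Filter X // IsDoublyStable 𝒰 ℱ}).1, (q : _).1) ∈ UD U ∧
      ((q : {ℱ : Filter X // IsDoublyStable 𝒰 ℱ}).1, (p : _).1) ∈ UD U) :
    ∃ ℋ : {ℱ : Filter X // IsDoublyStable 𝒰 ℱ}, ∀ U ∈ 𝒰,
      {𝒢 : {ℱ : Filter X // IsDoublyStable 𝒰 ℱ} |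
        (ℋ.1, 𝒢.1) ∈ UD U ∧ (𝒢.1, ℋ.1) ∈ UD U} ∈ Φ := by
  haveI := hne
  have hstable : IsDoublyStable 𝒰 (limFilter 𝒰 Φ) := by
    intro U hU
    obtain ⟨V, hV, hVV⟩ := h𝒰.comp U hU
    obtain ⟨S, hS, hpair⟩ := hcauchy V hV
    refine mem_limFilter.mpr ⟨V, hV, ?_⟩
    filter_upwards [hS] with 𝒢 h𝒢
    exact lemKEY hVV hS hpair h𝒢
  refine ⟨⟨limFilter 𝒰 Φ, hstable⟩, ?_⟩
  intro U hU
  obtain ⟨V, hV, hVV⟩ := h𝒰.comp U hU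
  obtain ⟨S, hS, hpair⟩ := hcauchy V hV
  filter_upwards [hS] with 𝒢 h𝒢
  have hkey : bigU V 𝒢.1 ⊆ bigU U (limFilter 𝒰 Φ) := lemKEY hVV hS hpair h𝒢
  have h𝒢V : bigU V 𝒢.1 ∈ 𝒢.1 := 𝒢.2 V hV
  refine ⟨⟨?_, ?_⟩, ?_, ?_⟩
  · exact mem_of_superset h𝒢V
      (hkey.trans (bigU_subset_iInter_relImg U (limFilter 𝒰 Φ)))
  · refine mem_limFilter.mpr ⟨V, hV, ?_⟩
    filter_upwards [hS] with 𝒢' h𝒢'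
    exact (lemA hVV (hpair 𝒢 h𝒢 𝒢' h𝒢').1 (hpair 𝒢 h𝒢 𝒢' h𝒢').2).trans
      (bigU_subset_iInter_relPre U 𝒢.1)
  · refine mem_limFilter.mpr ⟨V, hV, ?_⟩
    filter_upwards [hS] with 𝒢' h𝒢'
    exact (lemA hVV (hpair 𝒢 h𝒢 𝒢' h𝒢').1 (hpair 𝒢 h𝒢 𝒢' h𝒢').2).trans
      (bigU_subset_iInter_relImg U 𝒢.1)
  · exact mem_of_superset h𝒢V
      (hkey.trans (bigU_subset_iInter_relPre U (limFilter 𝒰 Φ)))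
end

section
/- A quasi-uniform space (X, 𝒰) is precompact if and only if the stability space (S_D(X), 𝒰_D) is precompact. -/
open Filter Set

variable {X Y : Type*}

/-- A quasi-uniform space is precompact if each entourage admits a finite
collection of balls covering the space. -/
def IsPrecompact (𝒰 : Filter (X × X)) : Prop :=
  ∀ U ∈ 𝒰, ∃ F : Set X, F.Finite ∧ ∀ x : X, ∃ f ∈ F, (f, x) ∈ U


lemma principal_doublyStable {X : Type*} {𝒰 : Filter (X × X)} (h : IsQuasiUniformity 𝒰)
    (E : Set X) : IsDoublyStable 𝒰 (𝓟 E) := by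
  intro U hU
  rw [Filter.mem_principal]
  intro e he
  simp only [bigU, Set.mem_iInter]
  intro F hF
  have heF : e ∈ F := hF he
  have hee : (e, e) ∈ U := h.refl U hU rfl
  exact ⟨⟨e, heF, hee⟩, ⟨e, heF, hee⟩⟩

theorem stmt19 (𝒰 : Filter (X × X)) (h𝒰 : IsQuasiUniformity 𝒰) :
    IsPrecompact 𝒰 ↔
      ∀ U ∈ 𝒰, ∃ T : Set (Filter X), T.Finite ∧
        (∀ 𝒢 ∈ T, IsDoublyStable 𝒰 𝒢) ∧
        ∀ ℱ : Filter X, IsDoublyStable 𝒰 ℱ → ∃ 𝒢 ∈ T, (𝒢, ℱ) ∈ UD U := by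
  constructor
  · -- precompact X → precompact stability space
    intro hpre U hU
    obtain ⟨V, hV, hVV⟩ := h𝒰.comp U hU
    obtain ⟨K, hKfin, hKcov⟩ := hpre V hV
    refine ⟨(fun E => 𝓟 E) '' {E | E ⊆ K}, (hKfin.finite_subsets).image _, ?_, ?_⟩
    · rintro 𝒢 ⟨E, -, rfl⟩
      exact principal_doublyStable h𝒰 E
    · intro ℱ hℱ
      set A : Set X := ⋂ G ∈ ℱ.sets, relPre V G with hA_def
      have hA : A ∈ ℱ := by
        refine Filter.mem_of_superset (hℱ V hV) ?_
        intro a ha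
        simp only [hA_def, Set.mem_iInter]
        intro G hG
        have := (Set.mem_iInter.mp (Set.mem_iInter.mp ha G) hG)
        exact this.1
      set E : Set X := {k | k ∈ K ∧ ∃ a ∈ A, (k, a) ∈ V} with hE_def
      refine ⟨𝓟 E, ⟨E, fun k hk => hk.1, rfl⟩, ?_, ?_⟩
      · -- ⋂ F ∈ (𝓟 E).sets, relImg U F ∈ ℱ
        refine Filter.mem_of_superset hA ?_
        intro a ha
        simp only [Set.mem_iInter]
        intro F hF
        obtain ⟨k, hkK, hka⟩ := hKcov a
        have hkE : k ∈ E := ⟨hkK, a, ha, hka⟩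
        have hkF : k ∈ F := (Filter.mem_principal.mp hF) hkE
        exact ⟨k, hkF, hVV ⟨a, hka, h𝒰.refl V hV rfl⟩⟩
      · -- ⋂ G ∈ ℱ.sets, relPre U G ∈ 𝓟 E
        rw [Filter.mem_principal]
        intro k hk
        obtain ⟨hkK, a, ha, hka⟩ := hk
        simp only [Set.mem_iInter]
        intro G hG
        have haG : a ∈ relPre V G := Set.mem_iInter.mp (Set.mem_iInter.mp ha G) hG
        obtain ⟨y, hyG, hay⟩ := haG
        exact ⟨y, hyG, hVV ⟨a, hka, hay⟩⟩
  · -- precompact stability space → precompact X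
    intro h U hU
    obtain ⟨W, hW, hWW⟩ := h𝒰.comp U hU
    obtain ⟨T, hTfin, hTds, hTcov⟩ := h W hW
    classical
    refine ⟨⋃ 𝒢 ∈ T, if hne : (bigU W 𝒢).Nonempty then {hne.choose} else ∅,
      hTfin.biUnion (fun 𝒢 _ => by split <;> simp), ?_⟩
    intro x
    obtain ⟨𝒢, h𝒢T, hUD⟩ := hTcov (𝓟 {x}) (principal_doublyStable h𝒰 {x})
    have hx1 : x ∈ ⋂ G ∈ 𝒢.sets, relImg W G := Filter.mem_principal.mp hUD.1 rfl
    have hbig : bigU W 𝒢 ∈ 𝒢 := hTds 𝒢 h𝒢T W hW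
    -- relPre W {x} ∈ 𝒢
    have hpre𝒢 : relPre W {x} ∈ 𝒢 := by
      refine Filter.mem_of_superset hUD.2 ?_
      intro z hz
      exact Set.mem_iInter.mp (Set.mem_iInter.mp hz {x}) (Filter.mem_principal.mpr le_rfl)
    have hne : (bigU W 𝒢).Nonempty := by
      rcases (bigU W 𝒢).eq_empty_or_nonempty with he | hne
      · exfalso
        have hbot : (∅ : Set X) ∈ 𝒢 := he ▸ hbig
        have : x ∈ relImg W (∅ : Set X) :=
          Set.mem_iInter.mp (Set.mem_iInter.mp hx1 ∅) hbot
        obtain ⟨z, hz, -⟩ := this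
        exact hz
      · exact hne
    set p := hne.choose with hp_def
    have hpmem : p ∈ bigU W 𝒢 := hne.choose_spec
    refine ⟨p, ?_, ?_⟩
    · refine Set.mem_biUnion h𝒢T ?_
      rw [dif_pos hne]
      exact rfl
    · have hp2 : p ∈ relPre W (relPre W {x}) :=
        (Set.mem_iInter.mp (Set.mem_iInter.mp hpmem (relPre W {x})) hpre𝒢).1
      obtain ⟨y, hy, hpy⟩ := hp2
      obtain ⟨z, hz, hyz⟩ := hy
      rw [Set.mem_singleton_iff] at hz
      subst hz
      exact hWW ⟨y, hpy, hyz⟩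
end
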